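/- Let A, B be n×n real matrices forming a diagonally h-dominant pair. Let G be a word in {A,B}* of length g that contains as subwords all words over {A,B} of length n, and assume h = 2ng + 1. Choose X^{(ng+1)} ∈ {A, B} arbitrarily, and let X^{(t)} denote the t-th letter of the word G^n X^{(ng+1)} G^n (a word of length h). Then for any fixed indices κ₀ and κ_h in {1,…,n}, the expression β = X^{(1)}_{κ₀,κ₁} + X^{(2)}_{κ₁,κ₂} + … + X^{(h)}_{κ_{h−1},κ_h} attains its minimum over all tuples (κ₁,…,κ_{h−1}) at some tuple satisfying κ_{ng} = κ_{ng+1}. -/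

import Mathlib

/-- Tropical (min-plus) matrix product. -/
noncomputable def tropMul {l m o : Type*} [Fintype m] [Nonempty m]
    (A : Matrix l m ℝ) (B : Matrix m o ℝ) : Matrix l o ℝ :=
  fun i j => Finset.univ.inf' Finset.univ_nonempty fun t => A i t + B t j

/-- Evaluation of a word over `{x, y}` (here `true` stands for `x`, `false` for `y`)
as a tropical matrix product; the empty word evaluates to the junk value `A`. -/
noncomputable def evalWord {n : ℕ} [NeZero n] (A B : Matrix (Fin n) (Fin n) ℝ) :
    List Bool → Matrix (Fin n) (Fin n) ℝ
  | [] => A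
  | b :: t => t.foldl (fun M c => tropMul M (cond c A B)) (cond b A B)

/-- Tropical matrix power (`tropPow A k` is `A^k` for `k ≥ 1`; `A^0` is junk `= A`). -/
noncomputable def tropPow {n : ℕ} [NeZero n] (A : Matrix (Fin n) (Fin n) ℝ) (k : ℕ) :
    Matrix (Fin n) (Fin n) ℝ :=
  evalWord A A (List.replicate k true)

/-- Tropical permanent. -/
noncomputable def tropPerm {n : ℕ} (A : Matrix (Fin n) (Fin n) ℝ) : ℝ :=
  Finset.univ.inf' Finset.univ_nonempty fun σ : Equiv.Perm (Fin n) => ∑ i, A i (σ i)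

/-- `Σ(A)`: the set of permutations attaining the tropical permanent. -/
def minPerms {n : ℕ} (A : Matrix (Fin n) (Fin n) ℝ) : Set (Equiv.Perm (Fin n)) :=
  { σ | ∑ i, A i (σ i) = tropPerm A }

/-- A matrix is sign-nonsingular if all permutations in `Σ(A)` have the same parity. -/
def SignNonsingular {n : ℕ} (A : Matrix (Fin n) (Fin n) ℝ) : Prop :=
  ∀ σ ∈ minPerms A, ∀ τ ∈ minPerms A, Equiv.Perm.sign σ = Equiv.Perm.sign τ

/-- A matrix is sign-singular if `Σ(A)` contains two permutations of different parity. -/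
def SignSingular {n : ℕ} (A : Matrix (Fin n) (Fin n) ℝ) : Prop :=
  ∃ σ ∈ minPerms A, ∃ τ ∈ minPerms A, Equiv.Perm.sign σ ≠ Equiv.Perm.sign τ

/-- Similarity transformation determined by `s`. -/
def simTrans {n : ℕ} (s : Fin n → ℝ) (C : Matrix (Fin n) (Fin n) ℝ) :
    Matrix (Fin n) (Fin n) ℝ :=
  fun i j => C i j + s i - s j

/-- Diagonally `H`-dominant matrix. -/
def DiagDominant {n : ℕ} (H : ℝ) (A : Matrix (Fin n) (Fin n) ℝ) : Prop :=
  ∀ i j, A i j ≥ max (A i i) (A j j) + H * |A i i - A j j|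

/-- Diagonally `H`-dominant pair of matrices. -/
def DiagDomPair {n : ℕ} (H : ℝ) (A B : Matrix (Fin n) (Fin n) ℝ) : Prop :=
  (∀ i, A i i = B i i) ∧ DiagDominant H (fun i j => min (A i j) (B i j))

namespace S12

variable {n : ℕ}

/-- Step cost of a path at time `t`. -/
noncomputable def sC (A B : Matrix (Fin n) (Fin n) ℝ) (W : ℕ → Bool) (κ : ℕ → Fin n)
    (t : ℕ) : ℝ :=
  (cond (W t) A B) (κ t) (κ (t+1))

/-- Total cost of a length-`h` path. -/
noncomputable def cost (A B : Matrix (Fin n) (Fin n) ℝ) (W : ℕ → Bool) (h : ℕ)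
    (κ : ℕ → Fin n) : ℝ :=
  ∑ t ∈ Finset.range h, sC A B W κ t

/-- Jump times of a path. -/
def jumps (h : ℕ) (κ : ℕ → Fin n) : Finset ℕ :=
  (Finset.range h).filter (fun t => κ t ≠ κ (t+1))

variable {A B : Matrix (Fin n) (Fin n) ℝ} {W : ℕ → Bool} {h : ℕ}

lemma cond_apply (c : Bool) (x y : Fin n) :
    (cond c A B) x y = if c then A x y else B x y := by cases c <;> simp

lemma diag_apply (hAB : ∀ i, A i i = B i i) (c : Bool) (x : Fin n) :
    (cond c A B) x x = A x x := by cases c <;> simp [hAB x]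

lemma min_le_cond (c : Bool) (x y : Fin n) :
    min (A x y) (B x y) ≤ (cond c A B) x y := by
  cases c <;> simp

lemma cond_decide (x y : Fin n) :
    (cond (decide (A x y ≤ B x y)) A B) x y = min (A x y) (B x y) := by
  by_cases hxy : A x y ≤ B x y
  · simp [hxy, min_eq_left hxy]
  · simp [hxy, min_eq_right (le_of_not_ge hxy)]

lemma step_lb (hAB : ∀ i, A i i = B i i)
    (hdom : ∀ i j, min (A i j) (B i j) ≥
      max (min (A i i) (B i i)) (min (A j j) (B j j)) +
        (h:ℝ) * |min (A i i) (B i i) - min (A j j) (B j j)|)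
    (c : Bool) (x y : Fin n) :
    max (A x x) (A y y) + (h:ℝ) * |A x x - A y y| ≤ (cond c A B) x y := by
  have h1 := hdom x y
  rw [show min (A x x) (B x x) = A x x by rw [hAB x, min_self],
      show min (A y y) (B y y) = A y y by rw [hAB y, min_self]] at h1
  exact le_trans h1 (min_le_cond c x y)

/-- Cost only depends on the values of the path on `[0, h]`. -/
lemma cost_congr {κ κ' : ℕ → Fin n} (hagree : ∀ t ≤ h, κ t = κ' t) :
    cost A B W h κ = cost A B W h κ' := by
  unfold cost sC
  refine Finset.sum_congr rfl fun t ht => ?_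
  rw [Finset.mem_range] at ht
  rw [hagree t (le_of_lt ht), hagree (t+1) ht]

/-- The core telescoping estimate. -/
lemma tele_lb (e : ℕ → ℝ) (H : ℝ) :
    ∀ (k a : ℕ), (k:ℝ) ≤ H →
      (k:ℝ) * e a ≤ ∑ t ∈ Finset.Ico a (a+k), (e (t+1) + H * |e t - e (t+1)|) := by
  intro k
  induction k with
  | zero => intro a _; simp
  | succ k ih =>
      intro a hk
      have hk' : (k:ℝ) ≤ H := le_trans (by exact_mod_cast Nat.le_succ k) hk
      rw [Finset.sum_eq_sum_Ico_succ_bot (by omega) _]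
      have h2 : (a+1) + k = a + (k+1) := by omega
      have h1 := ih (a+1) hk'
      rw [h2] at h1
      have habs : |e a - e (a+1)| ≥ e a - e (a+1) := le_abs_self _
      have habs0 : |e a - e (a+1)| ≥ 0 := abs_nonneg _
      have hcast : ((k+1 : ℕ):ℝ) = (k:ℝ) + 1 := by push_cast; ring
      rw [hcast]
      nlinarith [h1, habs, habs0, hk]

/-- Lower bound for the cost of any path segment: at least (length) × (initial diagonal). -/
lemma seg_lb (hAB : ∀ i, A i i = B i i)
    (hdom : ∀ i j, min (A i j) (B i j) ≥
      max (min (A i i) (B i i)) (min (A j j) (B j j)) +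
        (h:ℝ) * |min (A i i) (B i i) - min (A j j) (B j j)|)
    (κ : ℕ → Fin n) {a b : ℕ} (hab : a ≤ b) (hbh : b ≤ h) :
    ((b - a : ℕ):ℝ) * A (κ a) (κ a) ≤ ∑ t ∈ Finset.Ico a b, sC A B W κ t := by
  have key := tele_lb (fun t => A (κ t) (κ t)) (h:ℝ) (b - a) a
    (by exact_mod_cast Nat.sub_le_of_le_add (by omega))
  rw [show a + (b - a) = b by omega] at key
  refine le_trans key (Finset.sum_le_sum fun t _ => ?_)
  have h1 := step_lb hAB hdom (W t) (κ t) (κ (t+1))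
  unfold sC
  have : A (κ (t+1)) (κ (t+1)) ≤ max (A (κ t) (κ t)) (A (κ (t+1)) (κ (t+1))) := le_max_right _ _
  linarith


/-- Loopified path: constant on `[a,b]`. -/
def loopify (κ : ℕ → Fin n) (a b : ℕ) : ℕ → Fin n :=
  fun t => if a ≤ t ∧ t ≤ b then κ a else κ t

lemma loopify_jumps_subset {κ : ℕ → Fin n} {a b : ℕ} (hab : κ a = κ b) :
    jumps h (loopify κ a b) ⊆ jumps h κ := by
  intro t ht
  rw [jumps, Finset.mem_filter] at ht ⊢
  refine ⟨ht.1, fun heq => ht.2 ?_⟩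
  unfold loopify
  by_cases h1 : a ≤ t ∧ t ≤ b
  · by_cases h2 : a ≤ t + 1 ∧ t + 1 ≤ b
    · simp [h1, h2]
    · have : t + 1 = b + 1 := by omega
      have hb : t = b := by omega
      simp only [h1, h2, and_self, if_true, if_false]
      rw [hab, ← hb, heq]
  · by_cases h2 : a ≤ t + 1 ∧ t + 1 ≤ b
    · have : t + 1 = a := by omega
      simp only [h1, h2, and_self, if_true, if_false]
      rw [← this, heq]
    · simp only [h1, h2, if_false]
      exact heq

lemma loopify_cost_le (hAB : ∀ i, A i i = B i i)
    (hdom : ∀ i j, min (A i j) (B i j) ≥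
      max (min (A i i) (B i i)) (min (A j j) (B j j)) +
        (h:ℝ) * |min (A i i) (B i i) - min (A j j) (B j j)|)
    {κ : ℕ → Fin n} {a b : ℕ} (hab : a ≤ b) (hbh : b ≤ h) (he : κ a = κ b) :
    cost A B W h (loopify κ a b) ≤ cost A B W h κ := by
  unfold cost
  rw [Finset.range_eq_Ico]
  have sp : ∀ (f : ℕ → ℝ), ∑ t ∈ Finset.Ico 0 h, f t
      = ∑ t ∈ Finset.Ico 0 a, f t + ∑ t ∈ Finset.Ico a b, f t + ∑ t ∈ Finset.Ico b h, f t := by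
    intro f
    rw [add_assoc, Finset.sum_Ico_consecutive f hab hbh,
        Finset.sum_Ico_consecutive f (Nat.zero_le a) (le_trans hab hbh)]
  rw [sp, sp]
  have out1 : ∀ t ∈ Finset.Ico 0 a, sC A B W (loopify κ a b) t = sC A B W κ t := by
    intro t ht
    rw [Finset.mem_Ico] at ht
    unfold sC loopify
    have h1 : ¬ (a ≤ t ∧ t ≤ b) := by omega
    by_cases h2 : a ≤ t + 1 ∧ t + 1 ≤ b
    · have h3 : t + 1 = a := by omega
      simp only [h1, h2, and_self, if_true, if_false, h3]
      simp
    · simp only [h1, h2, if_false]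
  have out2 : ∀ t ∈ Finset.Ico b h, sC A B W (loopify κ a b) t = sC A B W κ t := by
    intro t ht
    rw [Finset.mem_Ico] at ht
    unfold sC loopify
    have h2 : ¬ (a ≤ t + 1 ∧ t + 1 ≤ b) := by omega
    by_cases h1 : a ≤ t ∧ t ≤ b
    · have h3 : t = b := by omega
      simp only [h1, h2, and_self, if_true, if_false, h3, he]
      simp [h2]
    · simp only [h1, h2, if_false]
  rw [Finset.sum_congr rfl out1, Finset.sum_congr rfl out2]
  have mid : ∑ t ∈ Finset.Ico a b, sC A B W (loopify κ a b) t
      = ((b - a : ℕ):ℝ) * A (κ a) (κ a) := by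
    have : ∀ t ∈ Finset.Ico a b, sC A B W (loopify κ a b) t = A (κ a) (κ a) := by
      intro t ht
      rw [Finset.mem_Ico] at ht
      unfold sC loopify
      have h1 : a ≤ t ∧ t ≤ b := by omega
      have h2 : a ≤ t + 1 ∧ t + 1 ≤ b := by omega
      simp only [h1, h2, and_self, if_true]
      exact diag_apply hAB _ _
    rw [Finset.sum_congr rfl this, Finset.sum_const, Nat.card_Ico, nsmul_eq_mul]
  rw [mid]
  have := seg_lb (W := W) hAB hdom κ hab hbh
  linarith

/-- If a path has ≥ n jumps, we can strictly reduce the number of jumps without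
increasing cost or changing endpoints. -/
lemma reduce_step (hAB : ∀ i, A i i = B i i)
    (hdom : ∀ i j, min (A i j) (B i j) ≥
      max (min (A i i) (B i i)) (min (A j j) (B j j)) +
        (h:ℝ) * |min (A i i) (B i i) - min (A j j) (B j j)|)
    {κ : ℕ → Fin n} (hcard : n ≤ (jumps h κ).card) :
    ∃ κ₂ : ℕ → Fin n, κ₂ 0 = κ 0 ∧ κ₂ h = κ h ∧
      cost A B W h κ₂ ≤ cost A B W h κ ∧ (jumps h κ₂).card < (jumps h κ).card := by
  -- pigeonhole on landing times
  classical
  set L : Finset ℕ := insert 0 ((jumps h κ).image (· + 1)) with hL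
  have hLcard : (jumps h κ).card + 1 ≤ L.card := by
    rw [hL, Finset.card_insert_of_notMem (by simp), Finset.card_image_of_injective _
      (fun x y hxy => by omega)]
  have hmaps : ∀ t ∈ L, κ t ∈ (Finset.univ : Finset (Fin n)) := fun _ _ => Finset.mem_univ _
  have hpig : (Finset.univ : Finset (Fin n)).card < L.card := by
    rw [Finset.card_univ, Fintype.card_fin]; omega
  obtain ⟨x, hx, y, hy, hxy, hval⟩ := Finset.exists_ne_map_eq_of_card_lt_of_maps_to hpig hmaps
  -- wlog x < y
  wlog hlt : x < y generalizing x y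
  · exact this y hy x hx (Ne.symm hxy) hval.symm (by omega)
  have hyJ : y - 1 ∈ jumps h κ ∧ y ≤ h := by
    have : y ∈ (jumps h κ).image (· + 1) := by
      rcases Finset.mem_insert.mp hy with h0 | h1
      · omega
      · exact h1
    obtain ⟨τ, hτ, hτy⟩ := Finset.mem_image.mp this
    have hyh : τ < h := Finset.mem_range.mp (Finset.mem_filter.mp hτ).1
    constructor
    · rw [show y - 1 = τ by omega]; exact hτ
    · omega
  refine ⟨loopify κ x y, ?_, ?_, loopify_cost_le hAB hdom (le_of_lt hlt) hyJ.2 hval, ?_⟩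
  · unfold loopify
    by_cases h1 : x ≤ 0 ∧ 0 ≤ y
    · have h3 : x = 0 := by omega
      subst h3
      simp
    · have h3 : ¬ (x ≤ 0 ∧ 0 ≤ y) := h1
      simp only [h3, if_false]
  · unfold loopify
    by_cases h1 : x ≤ h ∧ h ≤ y
    · have h3 : y = h := by omega
      subst h3
      simp [hval]
    · have h3 : ¬ (x ≤ h ∧ h ≤ y) := h1
      simp only [h3, if_false]
  · refine Finset.card_lt_card ⟨loopify_jumps_subset hval, fun hsub => ?_⟩
    have h1 : y - 1 ∈ jumps h (loopify κ x y) := hsub hyJ.1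
    rw [jumps, Finset.mem_filter] at h1
    apply h1.2
    unfold loopify
    have hx1 : x ≤ y - 1 ∧ y - 1 ≤ y := by omega
    have hx2 : x ≤ (y-1) + 1 ∧ (y-1)+1 ≤ y := by omega
    simp only [hx1, hx2, and_self, if_true]

/-- Any path can be replaced by one with `< n` jumps, same endpoints, no larger cost. -/
lemma reduce (hn : 0 < n) (hAB : ∀ i, A i i = B i i)
    (hdom : ∀ i j, min (A i j) (B i j) ≥
      max (min (A i i) (B i i)) (min (A j j) (B j j)) +
        (h:ℝ) * |min (A i i) (B i i) - min (A j j) (B j j)|)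
    (κ : ℕ → Fin n) :
    ∃ κ₂ : ℕ → Fin n, κ₂ 0 = κ 0 ∧ κ₂ h = κ h ∧
      cost A B W h κ₂ ≤ cost A B W h κ ∧ (jumps h κ₂).card < n := by
  by_cases hc : (jumps h κ).card < n
  · exact ⟨κ, rfl, rfl, le_refl _, hc⟩
  · obtain ⟨κ₂, h0, hh, hcost, hred⟩ := reduce_step hAB hdom (le_of_not_gt hc)
    have : (jumps h κ₂).card < (jumps h κ).card := hred
    obtain ⟨κ₃, h0', hh', hcost', hred'⟩ := reduce hn hAB hdom κ₂
    exact ⟨κ₃, by rw [h0', h0], by rw [hh', hh], le_trans hcost' hcost, hred'⟩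
termination_by (jumps h κ).card


/-! ### Word lemmas -/

/-- The word `GⁿbGⁿ` as a function. -/
def Wfun (nn : ℕ) (G : List Bool) (b : Bool) : ℕ → Bool :=
  fun t => ((List.replicate nn G).flatten ++ b :: (List.replicate nn G).flatten).getD t true

lemma join_replicate_length (G : List Bool) (k : ℕ) :
    (List.replicate k G).flatten.length = k * G.length := by
  induction k with
  | zero => simp
  | succ k ih =>
      rw [List.replicate_succ]
      show (G ++ (List.replicate k G).flatten).length = _
      rw [List.length_append, ih]; ring

lemma join_replicate_getD (G : List Bool) (hg : 0 < G.length) :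
    ∀ (k t : ℕ), t < k * G.length →
      (List.replicate k G).flatten.getD t true = G.getD (t % G.length) true := by
  intro k
  induction k with
  | zero => intro t ht; omega
  | succ k ih =>
      intro t ht
      rw [List.replicate_succ]
      show (G ++ (List.replicate k G).flatten).getD t true = _
      by_cases h1 : t < G.length
      · rw [List.getD_append _ _ _ _ h1, Nat.mod_eq_of_lt h1]
      · push_neg at h1
        have hm : (k+1)*G.length = k*G.length + G.length := by ring
        rw [List.getD_append_right _ _ _ _ h1, ih (t - G.length) (by omega),
            Nat.mod_eq_sub_mod h1]

lemma Wfun_first {nn : ℕ} {G : List Bool} {b : Bool} (hg : 0 < G.length) {t : ℕ}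
    (ht : t < nn * G.length) :
    Wfun nn G b t = G.getD (t % G.length) true := by
  unfold Wfun
  rw [List.getD_append _ _ _ _ (by rw [join_replicate_length]; exact ht)]
  exact join_replicate_getD G hg nn t ht

lemma Wfun_mid {nn : ℕ} {G : List Bool} {b : Bool} :
    Wfun nn G b (nn * G.length) = b := by
  unfold Wfun
  rw [List.getD_append_right _ _ _ _ (by rw [join_replicate_length])]
  rw [join_replicate_length, Nat.sub_self]
  rfl

lemma Wfun_second {nn : ℕ} {G : List Bool} {b : Bool} (hg : 0 < G.length) {t : ℕ}
    (ht : t < nn * G.length) :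
    Wfun nn G b (nn * G.length + 1 + t) = G.getD (t % G.length) true := by
  unfold Wfun
  rw [List.getD_append_right _ _ _ _ (by rw [join_replicate_length]; omega)]
  rw [join_replicate_length]
  have h1 : nn * G.length + 1 + t - nn * G.length = t + 1 := by omega
  rw [h1]
  show (List.replicate nn G).flatten.getD t true = _
  exact join_replicate_getD G hg nn t ht

/-- Any word of length ≤ n occurs in `G` at an offset `off` with `off + n ≤ g`. -/
lemma occurrence {nn : ℕ} {G : List Bool}
    (hsub : ∀ u : List Bool, u.length = nn → u <:+: G)
    (w : List Bool) (hw : w.length ≤ nn) :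
    ∃ off, off + nn ≤ G.length ∧ ∀ q < w.length, G.getD (off + q) true = w.getD q true := by
  obtain ⟨s, t, hst⟩ := hsub (w ++ List.replicate (nn - w.length) true)
    (by simp; omega)
  refine ⟨s.length, ?_, ?_⟩
  · have := congrArg List.length hst
    simp at this
    omega
  · intro q hq
    rw [← hst, List.append_assoc, List.getD_append_right _ _ _ _ (by omega),
        show s.length + q - s.length = q by omega,
        List.getD_append _ _ _ _ (by rw [List.length_append]; omega),
        List.getD_append _ _ _ _ hq]


/-- Pigeonhole: some aligned copy contains no element of `J`. -/
lemma exists_free_copy {J : Finset ℕ} {nn : ℕ} (hJ : J.card < nn) (base g : ℕ) (hg : 0 < g) :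
    ∃ c < nn, ∀ t ∈ J, ¬(base + c*g ≤ t ∧ t < base + c*g + g) := by
  by_contra hcon
  push_neg at hcon
  have hch : ∀ c ∈ Finset.range nn, ∃ t, t ∈ J ∧ base + c*g ≤ t ∧ t < base + c*g + g := by
    intro c hc
    obtain ⟨t, ht, h1, h2⟩ := hcon c (Finset.mem_range.mp hc)
    exact ⟨t, ht, h1, h2⟩
  choose f hf using hch
  have hinj : Set.InjOn (fun c => if hc : c ∈ Finset.range nn then f c hc else 0)
      ↑(Finset.range nn) := by
    intro c hc c' hc' heq
    simp only [Finset.mem_coe] at hc hc'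
    simp only [dif_pos hc, dif_pos hc'] at heq
    obtain ⟨_, h1, h2⟩ := hf c hc
    obtain ⟨_, h1', h2'⟩ := hf c' hc'
    rw [heq] at h1 h2
    by_contra hne
    rcases Nat.lt_or_ge c c' with hlt | hge
    · have h5 : c + 1 ≤ c' := hlt
      have h6 : (c+1)*g ≤ c'*g := Nat.mul_le_mul_right g h5
      have h7 : (c+1)*g = c*g + g := by ring
      omega
    · have h5 : c' + 1 ≤ c := by omega
      have h6 : (c'+1)*g ≤ c*g := Nat.mul_le_mul_right g h5
      have h7 : (c'+1)*g = c'*g + g := by ring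
      omega
  have hmaps : ∀ c ∈ Finset.range nn,
      (if hc : c ∈ Finset.range nn then f c hc else 0) ∈ J := by
    intro c hc
    simp only [dif_pos hc]
    exact (hf c hc).1
  have := Finset.card_le_card_of_injOn _ hmaps hinj
  simp at this
  omega

set_option maxHeartbeats 1000000 in
/-- The main construction: given a path with fewer than `n` jumps, produce a path with
a loop across the middle and no larger cost. -/
lemma main_construction {n : ℕ} (hn : 0 < n) {A B : Matrix (Fin n) (Fin n) ℝ}
    {G : List Bool} {b : Bool}
    (hgn : n ≤ G.length)
    (hAB : ∀ i, A i i = B i i)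
    (hsub : ∀ u : List Bool, u.length = n → u <:+: G)
    (κ : ℕ → Fin n)
    (hjc : (jumps (2*n*G.length+1) κ).card < n) :
    ∃ κs : ℕ → Fin n, κs 0 = κ 0 ∧ κs (2*n*G.length+1) = κ (2*n*G.length+1) ∧
      κs (n*G.length) = κs (n*G.length+1) ∧
      cost A B (Wfun n G b) (2*n*G.length+1) κs ≤ cost A B (Wfun n G b) (2*n*G.length+1) κ := by
  classical
  set g := G.length with hgdef
  have hg : 0 < g := by omega
  set h := 2*n*g+1 with hhdef
  set W := Wfun n G b with hWdef
  -- jump-free copies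
  obtain ⟨c₁, hc₁, hfree1⟩ := exists_free_copy hjc 0 g hg
  obtain ⟨c₂, hc₂, hfree2⟩ := exists_free_copy hjc (n*g+1) g hg
  set a := c₁ * g with hadef
  set bb := n*g+1+c₂*g with hbbdef
  have hag : a + g ≤ n * g := by
    have h6 : (c₁+1) * g ≤ n * g := Nat.mul_le_mul_right g hc₁
    have h7 : (c₁+1)*g = c₁*g + g := by ring
    omega
  have hbbg : bb + g ≤ h := by
    have h6 : (c₂+1) * g ≤ n * g := Nat.mul_le_mul_right g hc₂
    have h7 : (c₂+1)*g = c₂*g + g := by ring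
    have h8 : h = 2*n*g+1 := hhdef
    have h9 : 2*n*g = n*g + n*g := by ring
    omega
  have hngbb : n*g < bb := by omega
  -- window jumps
  set Jw : Finset ℕ := (Finset.Ico a (bb+g)).filter (fun t => κ t ≠ κ (t+1)) with hJwdef
  have hJwsub : Jw ⊆ jumps h κ := by
    intro t ht
    rw [hJwdef, Finset.mem_filter, Finset.mem_Ico] at ht
    rw [jumps, Finset.mem_filter, Finset.mem_range]
    exact ⟨by omega, ht.2⟩
  set l : List ℕ := Jw.sort (· ≤ ·) with hldef
  set m := l.length with hmdef
  have hmcard : m = Jw.card := Finset.length_sort _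
  have hmn : m < n := by
    have := Finset.card_le_card hJwsub
    omega
  set j : ℕ → ℕ := fun q => l.getD q 0 with hjdef
  have hjmem : ∀ q < m, j q ∈ Jw := by
    intro q hq
    have e1 : j q = l[q]'hq := List.getD_eq_getElem l 0 hq
    rw [e1, ← Finset.mem_sort (α := ℕ) (· ≤ ·)]
    exact List.getElem_mem _
  have hjmono : ∀ q q', q < q' → q' < m → j q < j q' := by
    intro q q' hqq' hq'
    have hs : l.Pairwise (· < ·) := (Finset.sortedLT_sort _).pairwise
    rw [List.pairwise_iff_get] at hs
    have h0 := hs ⟨q, by omega⟩ ⟨q', hq'⟩ hqq'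
    have e1 : j q = l[q]'(by omega) := List.getD_eq_getElem l 0 (by omega)
    have e2 : j q' = l[q']'hq' := List.getD_eq_getElem l 0 hq'
    rw [e1, e2]
    simpa [List.get_eq_getElem] using h0
  have hjmono' : ∀ q q', q ≤ q' → q' < m → j q ≤ j q' := by
    intro q q' hqq' hq'
    rcases Nat.eq_or_lt_of_le hqq' with h1 | h1
    · rw [h1]
    · exact le_of_lt (hjmono q q' h1 hq')
  have hjsurj : ∀ t ∈ Jw, ∃ q < m, j q = t := by
    intro t ht
    rw [← Finset.mem_sort (α := ℕ) (· ≤ ·), ← hldef] at ht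
    obtain ⟨q, hq, hql⟩ := List.mem_iff_getElem.mp ht
    refine ⟨q, hq, ?_⟩
    have e1 : j q = l[q]'hq := List.getD_eq_getElem l 0 hq
    rw [e1, hql]
  have hjrange : ∀ q < m, a + g ≤ j q ∧ j q < bb := by
    intro q hq
    have hmem := hjmem q hq
    have hmemJ := hJwsub hmem
    rw [hJwdef, Finset.mem_filter, Finset.mem_Ico] at hmem
    have h1 := hfree1 _ hmemJ
    have h2 := hfree2 _ hmemJ
    simp only [Nat.zero_add] at h1 h2
    omega
  have hjjump : ∀ q < m, κ (j q) ≠ κ (j q + 1) := by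
    intro q hq
    have := hjmem q hq
    rw [hJwdef, Finset.mem_filter] at this
    exact this.2
  have hloop : ∀ t, a ≤ t → t < bb + g → t ∉ Jw → κ t = κ (t+1) := by
    intro t h1 h2 h3
    by_contra hne
    exact h3 (by rw [hJwdef, Finset.mem_filter, Finset.mem_Ico]; exact ⟨⟨h1, h2⟩, hne⟩)
  -- constancy on jump-free stretches
  have hconst : ∀ s t, a ≤ s → s ≤ t → t ≤ bb + g →
      (∀ r, s ≤ r → r < t → r ∉ Jw) → κ s = κ t := by
    intro s t has hst htb hfree
    induction t, hst using Nat.le_induction with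
    | base => rfl
    | succ t hst ih =>
        have h1 : κ s = κ t := ih (by omega) (fun r h1 h2 => hfree r h1 (by omega))
        rw [h1]
        exact hloop t (by omega) (by omega) (hfree t (by omega) (by omega))
  -- minimal-diagonal time in window
  obtain ⟨tμ, htμmem, htμmin⟩ := Finset.exists_min_image (Finset.Icc a (bb+g))
    (fun t => A (κ t) (κ t)) ⟨a, Finset.mem_Icc.mpr (by omega)⟩
  rw [Finset.mem_Icc] at htμmem
  -- split index
  have hfindex : ∃ q, m ≤ q ∨ tμ ≤ j q := ⟨m, Or.inl le_rfl⟩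
  set m₁ := Nat.find hfindex with hm₁def
  have hm₁le : m₁ ≤ m := Nat.find_le (Or.inl le_rfl)
  have hlt : ∀ q < m₁, q < m ∧ j q < tμ := by
    intro q hq
    have := Nat.find_min hfindex hq
    push_neg at this
    omega
  have hge : ∀ q, m₁ ≤ q → q < m → tμ ≤ j q := by
    intro q h1 h2
    have hspec := Nat.find_spec hfindex
    rw [← hm₁def] at hspec
    rcases hspec with h3 | h3
    · omega
    · exact le_trans h3 (hjmono' m₁ q h1 h2)
  set m₂ := m - m₁ with hm₂def
  have hm12 : m₁ + m₂ = m := by omega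
  -- plateau vertices
  set ζ : ℕ → Fin n := fun q => if q = 0 then κ a else κ (j (q-1) + 1) with hζdef
  have hζ0 : ζ 0 = κ a := by simp [hζdef]
  have hζsucc : ∀ q, ζ (q+1) = κ (j q + 1) := by intro q; simp [hζdef]
  -- chain sources
  have hζsrc : ∀ q < m, κ (j q) = ζ q := by
    intro q hq
    match q with
    | 0 =>
        rw [hζ0]
        refine (hconst a (j 0) le_rfl (by have := hjrange 0 hq; omega)
          (by have := hjrange 0 hq; omega) ?_).symm
        intro r h1 h2 hmem
        obtain ⟨q', hq', hjq'⟩ := hjsurj r hmem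
        rcases Nat.eq_zero_or_pos q' with h3 | h3
        · rw [h3] at hjq'; omega
        · have := hjmono 0 q' h3 hq'; omega
    | (k+1) =>
        rw [hζsucc k]
        refine (hconst (j k + 1) (j (k+1)) (by have := hjrange k (by omega); omega)
          (by have := hjmono k (k+1) (by omega) hq; omega)
          (by have := hjrange (k+1) hq; omega) ?_).symm
        intro r h1 h2 hmem
        obtain ⟨q', hq', hjq'⟩ := hjsurj r hmem
        have hk1 : k < q' := by
          by_contra hcon
          have := hjmono' q' k (by omega) (by omega)
          omega
        have : j (k+1) ≤ j q' := hjmono' (k+1) q' (by omega) hq'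
        omega
  -- the split vertex is the min vertex
  have hζtμ : κ tμ = ζ m₁ := by
    cases hm : m₁ with
    | zero =>
        rw [hζ0]
        refine (hconst a tμ le_rfl htμmem.1 htμmem.2 ?_).symm
        intro r h1 h2 hmem
        obtain ⟨q', hq', hjq'⟩ := hjsurj r hmem
        have := hge q' (by omega) hq'
        omega
    | succ k =>
        rw [hζsucc k]
        have hk := hlt k (by omega)
        refine (hconst (j k + 1) tμ (by have := hjrange k hk.1; omega)
          (by omega) htμmem.2 ?_).symm
        intro r h1 h2 hmem
        obtain ⟨q', hq', hjq'⟩ := hjsurj r hmem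
        have hk1 : k < q' := by
          by_contra hcon
          have := hjmono' q' k (by omega) hk.1
          omega
        have := hge q' (by omega) hq'
        omega
  -- end plateau
  have hζend : ∀ t, bb ≤ t → t ≤ bb + g → κ t = ζ m := by
    intro t h1 h2
    match hm : m with
    | 0 =>
        rw [hζ0]
        refine (hconst a t (le_rfl) (by omega) h2 ?_).symm
        intro r hr1 hr2 hmem
        obtain ⟨q', hq', _⟩ := hjsurj r hmem
        omega
    | (k+1) =>
        rw [hζsucc k]
        have hjk := hjrange k (by omega)
        refine (hconst (j k + 1) t (by omega) (by omega) h2 ?_).symm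
        intro r hr1 hr2 hmem
        obtain ⟨q', hq', hjq'⟩ := hjsurj r hmem
        have : j q' ≤ j k := hjmono' q' k (by omega) (by omega)
        omega
  -- letters of the two chain words
  set cletter : ℕ → Bool := fun q => decide (A (ζ q) (ζ (q+1)) ≤ B (ζ q) (ζ (q+1)))
    with hcletterdef
  obtain ⟨off₁, hoff₁, hω₁⟩ := occurrence hsub (List.ofFn (fun q : Fin m₁ => cletter q))
    (by simp; omega)
  obtain ⟨off₂, hoff₂, hω₂⟩ := occurrence hsub (List.ofFn (fun q : Fin m₂ => cletter (m₁+q)))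
    (by simp; omega)
  simp only [List.length_ofFn] at hω₁ hω₂
  have hω₁' : ∀ q < m₁, G.getD (off₁ + q) true = cletter q := by
    intro q hq
    have hlen : q < (List.ofFn (fun q : Fin m₁ => cletter ↑q)).length := by simpa using hq
    rw [hω₁ q hq, List.getD_eq_getElem _ _ hlen, List.getElem_ofFn]
  have hω₂' : ∀ q < m₂, G.getD (off₂ + q) true = cletter (m₁+q) := by
    intro q hq
    have hlen : q < (List.ofFn (fun q : Fin m₂ => cletter (m₁ + ↑q))).length := by simpa using hq
    rw [hω₂ q hq, List.getD_eq_getElem _ _ hlen, List.getElem_ofFn]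
  set t₁ := a + off₁ with ht₁def
  set t₂ := bb + off₂ with ht₂def
  set E := t₂ + m₂ with hEdef
  -- arithmetic facts
  have harith1 : t₁ + m₁ ≤ a + g := by omega
  have harith2 : E ≤ bb + g := by omega
  have harith3 : a + g ≤ n*g := hag
  have harith4 : t₁ + m₁ ≤ n*g := by omega
  have harith5 : n*g + 1 ≤ t₂ := by omega
  have harith6 : t₁ < t₂ := by omega
  -- the new path
  set κs : ℕ → Fin n := fun t =>
    if t ≤ a ∨ E ≤ t then κ t else ζ (min m₁ (t - t₁) + min m₂ (t - t₂)) with hκsdef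
  -- evaluation lemmas
  have hE1 : ∀ t, t ≤ a → κs t = κ t := by
    intro t ht; rw [hκsdef]; simp [ht]
  have hE2 : ∀ t, E ≤ t → κs t = κ t := by
    intro t ht; rw [hκsdef]; simp only []; rw [if_pos (Or.inr ht)]
  have hE3 : ∀ t, a ≤ t → t ≤ t₁ → κs t = ζ 0 := by
    intro t h1 h2
    rcases Nat.eq_or_lt_of_le h1 with h3 | h3
    · rw [hE1 t (by omega), ← h3, hζ0]
    · rw [hκsdef]
      simp only []
      rw [if_neg (by omega)]
      congr 1
      have e1 : t - t₁ = 0 := by omega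
      have e2 : t - t₂ = 0 := by omega
      rw [e1, e2]
      simp
  have hE4 : ∀ q, q ≤ m₁ → κs (t₁ + q) = ζ q := by
    intro q hq
    rcases Nat.eq_zero_or_pos q with h1 | h1
    · rw [h1]
      exact hE3 (t₁ + 0) (by omega) (by omega)
    · rw [hκsdef]
      simp only []
      rw [if_neg (by omega)]
      congr 1
      have e1 : t₁ + q - t₁ = q := by omega
      have e2 : t₁ + q - t₂ = 0 := by omega
      rw [e1, e2, Nat.min_eq_right hq]
      simp
  have hE5 : ∀ t, t₁ + m₁ ≤ t → t ≤ t₂ → κs t = ζ m₁ := by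
    intro t h1 h2
    by_cases h3 : t ≤ a
    · have e0 : m₁ = 0 := by omega
      rw [hE1 t h3, show t = a by omega, e0, hζ0]
    · by_cases h4 : E ≤ t
      · have e1 : t = E := by omega
        have e2 : m₂ = 0 := by omega
        have e3 : m₁ = m := by omega
        rw [hE2 t h4, e1, e3]
        exact hζend E (by omega) (by omega)
      · rw [hκsdef]
        simp only []
        rw [if_neg (by omega)]
        congr 1
        have e2 : t - t₂ = 0 := by omega
        rw [e2, Nat.min_eq_left (by omega)]
        simp
  have hE6 : ∀ q, q ≤ m₂ → κs (t₂ + q) = ζ (m₁ + q) := by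
    intro q hq
    rcases Nat.eq_or_lt_of_le hq with h1 | h1
    · rw [h1, hE2 (t₂ + m₂) (by omega), hm12]
      exact hζend (t₂ + m₂) (by omega) (by omega)
    · rw [hκsdef]
      simp only []
      rw [if_neg (by omega)]
      congr 1
      have e1 : t₂ + q - t₂ = q := by omega
      rw [e1, Nat.min_eq_left (by omega), Nat.min_eq_right (by omega)]
  -- letters at scheduled chain positions
  have hlet1 : ∀ q < m₁, W (t₁ + q) = cletter q := by
    intro q hq
    have h1 : t₁ + q < n * g := by omega
    rw [hWdef, Wfun_first hg h1, ht₁def, hadef]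
    have e1 : c₁ * g + off₁ + q = (off₁ + q) + c₁ * g := by ring
    rw [e1, Nat.add_mul_mod_self_right, Nat.mod_eq_of_lt (by omega)]
    exact hω₁' q hq
  have hlet2 : ∀ q < m₂, W (t₂ + q) = cletter (m₁ + q) := by
    intro q hq
    have h1 : c₂ * g + off₂ + q < n * g := by
      have h6 : (c₂+1) * g ≤ n * g := Nat.mul_le_mul_right g hc₂
      have h7 : (c₂+1)*g = c₂*g + g := by ring
      omega
    have e0 : t₂ + q = n*g + 1 + (c₂ * g + off₂ + q) := by omega
    rw [hWdef, e0, Wfun_second hg h1]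
    have e1 : c₂ * g + off₂ + q = (off₂ + q) + c₂ * g := by ring
    rw [e1, Nat.add_mul_mod_self_right, Nat.mod_eq_of_lt (by omega)]
    exact hω₂' q hq
  -- abbreviations
  set D0 : ℝ := A (ζ 0) (ζ 0) with hD0def
  set Dμ : ℝ := A (ζ m₁) (ζ m₁) with hDμdef
  set Cmin : ℕ → ℝ := fun q => min (A (ζ q) (ζ (q+1))) (B (ζ q) (ζ (q+1))) with hCmindef
  set X : ℕ → ℝ := fun q => (cond (W (j q)) A B) (ζ q) (ζ (q+1)) with hXdef
  have hDμmin : ∀ t, a ≤ t → t ≤ bb + g → Dμ ≤ A (κ t) (κ t) := by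
    intro t h1 h2
    rw [hDμdef, ← hζtμ]
    exact htμmin t (Finset.mem_Icc.mpr ⟨h1, h2⟩)
  -- cost split
  refine ⟨κs, hE1 0 (by omega), hE2 h (by omega), ?_, ?_⟩
  · rw [hE5 (n*g) (by omega) (by omega), hE5 (n*g+1) (by omega) (by omega)]
  unfold cost
  rw [Finset.range_eq_Ico]
  have hsplit : ∀ κx : ℕ → Fin n, ∑ t ∈ Finset.Ico 0 h, sC A B W κx t
      = ∑ t ∈ Finset.Ico 0 a, sC A B W κx t + ∑ t ∈ Finset.Ico a E, sC A B W κx t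
        + ∑ t ∈ Finset.Ico E h, sC A B W κx t := by
    intro κx
    rw [add_assoc, Finset.sum_Ico_consecutive _ (by omega : a ≤ E) (by omega : E ≤ h),
        Finset.sum_Ico_consecutive _ (by omega : 0 ≤ a) (by omega : a ≤ h)]
  rw [hsplit, hsplit]
  have hout1 : ∀ t ∈ Finset.Ico 0 a, sC A B W κs t = sC A B W κ t := by
    intro t ht
    rw [Finset.mem_Ico] at ht
    unfold sC
    rw [hE1 t (by omega), hE1 (t+1) (by omega)]
  have hout2 : ∀ t ∈ Finset.Ico E h, sC A B W κs t = sC A B W κ t := by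
    intro t ht
    rw [Finset.mem_Ico] at ht
    unfold sC
    rw [hE2 t (by omega), hE2 (t+1) (by omega)]
  rw [Finset.sum_congr rfl hout1, Finset.sum_congr rfl hout2]
  -- main window inequality
  have hwin : ∑ t ∈ Finset.Ico a E, sC A B W κs t ≤ ∑ t ∈ Finset.Ico a E, sC A B W κ t := by
    -- new cost
    have hnew : ∑ t ∈ Finset.Ico a E, sC A B W κs t
        = off₁ • D0 + ∑ q ∈ Finset.range m, Cmin q + (t₂ - (t₁ + m₁)) • Dμ := by
      rw [← Finset.sum_Ico_consecutive (sC A B W κs) (by omega : a ≤ t₁) (by omega : t₁ ≤ E),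
          ← Finset.sum_Ico_consecutive (sC A B W κs)
            (by omega : t₁ ≤ t₁ + m₁) (by omega : t₁ + m₁ ≤ E),
          ← Finset.sum_Ico_consecutive (sC A B W κs)
            (by omega : t₁ + m₁ ≤ t₂) (by omega : t₂ ≤ E)]
      have hseg1 : ∑ t ∈ Finset.Ico a t₁, sC A B W κs t = off₁ • D0 := by
        rw [Finset.sum_congr rfl (fun t ht => ?_), Finset.sum_const, Nat.card_Ico,
          show t₁ - a = off₁ by omega]
        rw [Finset.mem_Ico] at ht
        unfold sC
        rw [hE3 t (by omega) (by omega), hE3 (t+1) (by omega) (by omega)]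
        exact diag_apply hAB _ _
      have hseg2 : ∑ t ∈ Finset.Ico t₁ (t₁+m₁), sC A B W κs t
          = ∑ q ∈ Finset.range m₁, Cmin q := by
        rw [Finset.sum_Ico_eq_sum_range, show t₁ + m₁ - t₁ = m₁ by omega]
        refine Finset.sum_congr rfl (fun q hq => ?_)
        rw [Finset.mem_range] at hq
        unfold sC
        rw [hE4 q (by omega), show t₁ + q + 1 = t₁ + (q+1) by omega, hE4 (q+1) (by omega),
            hlet1 q hq, hcletterdef]
        exact cond_decide _ _
      have hseg3 : ∑ t ∈ Finset.Ico (t₁+m₁) t₂, sC A B W κs t = (t₂ - (t₁ + m₁)) • Dμ := by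
        rw [Finset.sum_congr rfl (fun t ht => ?_), Finset.sum_const, Nat.card_Ico]
        rw [Finset.mem_Ico] at ht
        unfold sC
        rw [hE5 t (by omega) (by omega), hE5 (t+1) (by omega) (by omega)]
        exact diag_apply hAB _ _
      have hseg4 : ∑ t ∈ Finset.Ico t₂ E, sC A B W κs t
          = ∑ q ∈ Finset.range m₂, Cmin (m₁ + q) := by
        rw [Finset.sum_Ico_eq_sum_range, show E - t₂ = m₂ by omega]
        refine Finset.sum_congr rfl (fun q hq => ?_)
        rw [Finset.mem_range] at hq
        unfold sC
        rw [hE6 q (by omega), show t₂ + q + 1 = t₂ + (q+1) by omega, hE6 (q+1) (by omega),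
            hlet2 q hq, hcletterdef]
        exact cond_decide _ _
      rw [hseg1, hseg2, hseg3, hseg4, ← hm12, Finset.sum_range_add]
      ring
    -- old cost
    have hold : off₁ • D0 + ∑ q ∈ Finset.range m, X q + ((E - t₁) - m) • Dμ
        ≤ ∑ t ∈ Finset.Ico a E, sC A B W κ t := by
      rw [← Finset.sum_Ico_consecutive (sC A B W κ) (by omega : a ≤ t₁) (by omega : t₁ ≤ E)]
      have ho1 : ∑ t ∈ Finset.Ico a t₁, sC A B W κ t = off₁ • D0 := by
        have hconst1 : ∀ t, a ≤ t → t ≤ t₁ → κ t = ζ 0 := by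
          intro t h1 h2
          rw [hζ0]
          refine (hconst a t le_rfl h1 (by omega) ?_).symm
          intro r hr1 hr2 hmem
          obtain ⟨q', hq', hjq'⟩ := hjsurj r hmem
          have := hjrange q' hq'
          omega
        rw [Finset.sum_congr rfl (fun t ht => ?_), Finset.sum_const, Nat.card_Ico,
          show t₁ - a = off₁ by omega]
        rw [Finset.mem_Ico] at ht
        unfold sC
        rw [hconst1 t (by omega) (by omega), hconst1 (t+1) (by omega) (by omega)]
        exact diag_apply hAB _ _
      have hJsub2 : Jw ⊆ Finset.Ico t₁ E := by
        intro t ht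
        obtain ⟨q', hq', hjq'⟩ := hjsurj t ht
        have := hjrange q' hq'
        rw [Finset.mem_Ico]
        omega
      have ho2 : ∑ q ∈ Finset.range m, X q + ((E - t₁) - m) • Dμ
          ≤ ∑ t ∈ Finset.Ico t₁ E, sC A B W κ t := by
        rw [← Finset.sum_sdiff hJsub2]
        have hJq : ∑ t ∈ Jw, sC A B W κ t = ∑ q ∈ Finset.range m, X q := by
          refine (Finset.sum_bij (fun q _ => j q) ?_ ?_ ?_ ?_).symm
          · intro q hq
            exact hjmem q (Finset.mem_range.mp hq)
          · intro q1 hq1 q2 hq2 heq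
            have heq' : j q1 = j q2 := heq
            rw [Finset.mem_range] at hq1 hq2
            by_contra hne
            rcases Nat.lt_or_ge q1 q2 with h1 | h1
            · have := hjmono q1 q2 h1 hq2; omega
            · have := hjmono q2 q1 (by omega) hq1; omega
          · intro t ht
            obtain ⟨q, hq, hjq⟩ := hjsurj t ht
            exact ⟨q, Finset.mem_range.mpr hq, hjq⟩
          · intro q hq
            rw [Finset.mem_range] at hq
            show X q = sC A B W κ (j q)
            show (cond (W (j q)) A B) (ζ q) (ζ (q+1))
              = (cond (W (j q)) A B) (κ (j q)) (κ (j q + 1))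
            rw [hζsrc q hq, ← hζsucc q]
        have hrest : ((E - t₁) - m) • Dμ ≤ ∑ t ∈ Finset.Ico t₁ E \ Jw, sC A B W κ t := by
          have hcard : (Finset.Ico t₁ E \ Jw).card = (E - t₁) - m := by
            rw [Finset.card_sdiff_of_subset hJsub2, Nat.card_Ico, hmcard]
          rw [← hcard]
          refine Finset.card_nsmul_le_sum _ _ _ (fun t ht => ?_)
          rw [Finset.mem_sdiff, Finset.mem_Ico] at ht
          have hl : κ t = κ (t+1) := hloop t (by omega) (by omega) ht.2
          unfold sC
          rw [← hl, diag_apply hAB]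
          exact hDμmin t (by omega) (by omega)
        rw [add_comm (∑ t ∈ Finset.Ico t₁ E \ Jw, sC A B W κ t)]
        rw [← hJq]
        exact add_le_add le_rfl hrest
      rw [ho1]
      have := add_le_add (le_refl (off₁ • D0)) ho2
      linarith
    have hCX : ∑ q ∈ Finset.range m, Cmin q ≤ ∑ q ∈ Finset.range m, X q := by
      refine Finset.sum_le_sum (fun q hq => ?_)
      rw [hCmindef, hXdef]
      exact min_le_cond _ _ _
    have hcount : (E - t₁) - m = t₂ - (t₁ + m₁) := by omega
    rw [hnew]
    rw [hcount] at hold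
    linarith
  linarith


/-- Existence of a minimizing path with prescribed endpoints. -/
lemma exists_min_path {n : ℕ} (hn : 0 < n) (A B : Matrix (Fin n) (Fin n) ℝ)
    (W : ℕ → Bool) (h : ℕ) (hh : 0 < h) (κ₀ κh : Fin n) :
    ∃ κ : ℕ → Fin n, κ 0 = κ₀ ∧ κ h = κh ∧
      ∀ κ' : ℕ → Fin n, κ' 0 = κ₀ → κ' h = κh →
        cost A B W h κ ≤ cost A B W h κ' := by
  classical
  haveI : NeZero n := ⟨by omega⟩
  set ext : (Fin (h+1) → Fin n) → (ℕ → Fin n) :=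
    fun f t => f ⟨min t h, by omega⟩ with hextdef
  set S : Finset (Fin (h+1) → Fin n) :=
    Finset.univ.filter (fun f => f ⟨0, by omega⟩ = κ₀ ∧ f ⟨h, by omega⟩ = κh) with hSdef
  have hne : S.Nonempty := by
    refine ⟨fun i => if (i : ℕ) = 0 then κ₀ else κh, ?_⟩
    rw [hSdef, Finset.mem_filter]
    refine ⟨Finset.mem_univ _, by simp, by simp; omega⟩
  obtain ⟨fmin, hfmem, hfmin⟩ := Finset.exists_min_image S (fun f => cost A B W h (ext f)) hne
  rw [hSdef, Finset.mem_filter] at hfmem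
  refine ⟨ext fmin, ?_, ?_, ?_⟩
  · rw [hextdef]
    simp only []
    rw [show (⟨min 0 h, by omega⟩ : Fin (h+1)) = ⟨0, by omega⟩ by simp]
    exact hfmem.2.1
  · rw [hextdef]
    simp only []
    rw [show (⟨min h h, by omega⟩ : Fin (h+1)) = ⟨h, by omega⟩ by simp]
    exact hfmem.2.2
  · intro κ' h0 hh'
    have hmem' : (fun i : Fin (h+1) => κ' (i : ℕ)) ∈ S := by
      rw [hSdef, Finset.mem_filter]
      exact ⟨Finset.mem_univ _, by simpa using h0, by simpa using hh'⟩
    have := hfmin _ hmem'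
    refine le_trans this (le_of_eq (cost_congr ?_))
    intro t ht
    rw [hextdef]
    simp only []
    congr 1
    omega

end S12


/-- Let `A, B` be a diagonally `h`-dominant pair with `h = 2ng + 1`,
and let `G` be a word of length `g` containing all words of length `n` as subwords.
For the word `GⁿXGⁿ` (with `X ∈ {A,B}` the `(ng+1)`-st letter, `true` coding `A`),
the expression `β` attains its minimum at a tuple with `κ_{ng} = κ_{ng+1}`. -/
theorem stmt12 {n g : ℕ} (hn : 0 < n) (A B : Matrix (Fin n) (Fin n) ℝ)
    (h : ℕ) (hhg : h = 2 * n * g + 1)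
    (hpair : DiagDomPair (h : ℝ) A B)
    (G : List Bool) (hG : G.length = g)
    (hsub : ∀ u : List Bool, u.length = n → u <:+: G)
    (b : Bool) (κ₀ κh : Fin n) :
    ∃ κ : ℕ → Fin n, κ 0 = κ₀ ∧ κ h = κh ∧ κ (n * g) = κ (n * g + 1) ∧
      ∀ κ' : ℕ → Fin n, κ' 0 = κ₀ → κ' h = κh →
        ∑ t ∈ Finset.range h,
            (cond (((List.replicate n G).flatten ++ b :: (List.replicate n G).flatten).getD t true)
              A B) (κ t) (κ (t + 1)) ≤
          ∑ t ∈ Finset.range h,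
            (cond (((List.replicate n G).flatten ++ b :: (List.replicate n G).flatten).getD t true)
              A B) (κ' t) (κ' (t + 1)) := by
  subst hG
  subst hhg
  have hAB : ∀ i, A i i = B i i := hpair.1
  have hdom : ∀ i j, min (A i j) (B i j) ≥
      max (min (A i i) (B i i)) (min (A j j) (B j j)) +
        ((2 * n * G.length + 1 : ℕ):ℝ) *
          |min (A i i) (B i i) - min (A j j) (B j j)| := fun i j => hpair.2 i j
  have hgn : n ≤ G.length := by
    have := (hsub (List.replicate n true) (by simp)).length_le
    simpa using this
  set h := 2 * n * G.length + 1 with hhdef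
  set W := S12.Wfun n G b with hWdef
  have hcost : ∀ κx : ℕ → Fin n, S12.cost A B W h κx
      = ∑ t ∈ Finset.range h,
          (cond (((List.replicate n G).flatten ++ b :: (List.replicate n G).flatten).getD t true)
            A B) (κx t) (κx (t + 1)) := fun κx => rfl
  obtain ⟨κm, hm0, hmh, hmin⟩ := S12.exists_min_path hn A B W h (by omega) κ₀ κh
  obtain ⟨κr, hr0, hrh, hrcost, hrjump⟩ := S12.reduce hn hAB hdom κm
  obtain ⟨κs, hs0, hsh, hsmid, hscost⟩ :=
    S12.main_construction hn hgn hAB hsub κr hrjump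
  refine ⟨κs, by rw [hs0, hr0, hm0], by rw [hsh, hrh, hmh], hsmid, ?_⟩
  intro κ' h0 hh'
  rw [← hcost, ← hcost]
  calc S12.cost A B W h κs ≤ S12.cost A B W h κr := hscost
    _ ≤ S12.cost A B W h κm := hrcost
    _ ≤ S12.cost A B W h κ' := hmin κ' h0 hh'
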